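/- Consider a BPVE with first moments m_n. If limsup_{n→∞} m_n < 1, then the BPVE dies out, i.e. p_e = 1. -/

import Mathlib

open Filter ENNReal

/-- Probability generating function `Φ_n(z) := ∑_i ρ_n(i) z^i` of the `n`-th offspring
distribution of a branching process in varying environment (BPVE). -/
noncomputable def Phi (ρ : ℕ → ℕ → ℝ) (n : ℕ) (z : ℝ) : ℝ :=
  ∑' i : ℕ, ρ n i * z ^ i

/-- The iterated generating functions `H_0(z) := z`, `H_{n+1} := H_n ∘ Φ_n`;
`H_n(0)` is the probability of extinction by generation `n`, and the extinction
probability is `p_e = lim_n H_n(0)`. -/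
noncomputable def Hseq (ρ : ℕ → ℕ → ℝ) : ℕ → ℝ → ℝ
  | 0 => fun z => z
  | n + 1 => fun z => Hseq ρ n (Phi ρ n z)

/-- First moment `m_n := ∑_i i ρ_n(i) ∈ [0,∞]` of the `n`-th offspring distribution. -/
noncomputable def mom (ρ : ℕ → ℕ → ℝ) (n : ℕ) : ℝ≥0∞ :=
  ∑' i : ℕ, (i : ℝ≥0∞) * ENNReal.ofReal (ρ n i)

/-- Second moment `m_n⁽²⁾ := ∑_i i² ρ_n(i) ∈ [0,∞]` of the `n`-th offspring
distribution. -/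
noncomputable def mom2 (ρ : ℕ → ℕ → ℝ) (n : ℕ) : ℝ≥0∞ :=
  ∑' i : ℕ, (i : ℝ≥0∞) ^ 2 * ENNReal.ofReal (ρ n i)

section Aux

variable {ρ : ℕ → ℕ → ℝ}

lemma phi_summable (hρ0 : ∀ n i, 0 ≤ ρ n i) (hρ1 : ∀ n, HasSum (ρ n) 1)
    (n : ℕ) {z : ℝ} (hz0 : 0 ≤ z) (hz1 : z ≤ 1) :
    Summable (fun i => ρ n i * z ^ i) := by
  refine (hρ1 n).summable.of_nonneg_of_le
    (fun i => mul_nonneg (hρ0 n i) (pow_nonneg hz0 i)) (fun i => ?_)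
  calc ρ n i * z ^ i ≤ ρ n i * 1 := by
        exact mul_le_mul_of_nonneg_left (pow_le_one₀ hz0 hz1) (hρ0 n i)
    _ = ρ n i := mul_one _

lemma phi_nonneg (hρ0 : ∀ n i, 0 ≤ ρ n i)
    (n : ℕ) {z : ℝ} (hz0 : 0 ≤ z) : 0 ≤ Phi ρ n z :=
  tsum_nonneg (fun i => mul_nonneg (hρ0 n i) (pow_nonneg hz0 i))

lemma phi_le_one (hρ0 : ∀ n i, 0 ≤ ρ n i) (hρ1 : ∀ n, HasSum (ρ n) 1)
    (n : ℕ) {z : ℝ} (hz0 : 0 ≤ z) (hz1 : z ≤ 1) : Phi ρ n z ≤ 1 := by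
  have h := Summable.tsum_le_tsum (f := fun i => ρ n i * z ^ i) (g := ρ n)
    (fun i => by
      calc ρ n i * z ^ i ≤ ρ n i * 1 :=
            mul_le_mul_of_nonneg_left (pow_le_one₀ hz0 hz1) (hρ0 n i)
        _ = ρ n i := mul_one _)
    (phi_summable hρ0 hρ1 n hz0 hz1) (hρ1 n).summable
  simpa [Phi, (hρ1 n).tsum_eq] using h

lemma phi_one (hρ1 : ∀ n, HasSum (ρ n) 1) (n : ℕ) : Phi ρ n 1 = 1 := by
  simp [Phi, (hρ1 n).tsum_eq]

lemma one_sub_pow_le {z : ℝ} (hz0 : 0 ≤ z) (hz1 : z ≤ 1) (i : ℕ) :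
    1 - z ^ i ≤ i * (1 - z) := by
  induction i with
  | zero => simp
  | succ i ih =>
    have hzi : z ^ i ≤ 1 := pow_le_one₀ hz0 hz1
    have : 1 - z ^ (i + 1) = (1 - z) + z * (1 - z ^ i) := by ring
    rw [this]
    push_cast
    have h2 : z * (1 - z ^ i) ≤ 1 * (1 - z ^ i) :=
      mul_le_mul_of_nonneg_right hz1 (by linarith)
    nlinarith

/-- If `mom ρ n ≤ ofReal c`, then `∑' i, i * ρ n i` is summable with sum `≤ c`. -/
lemma mom_summable (hρ0 : ∀ n i, 0 ≤ ρ n i) {n : ℕ} {c : ℝ} (hc : 0 ≤ c)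
    (h : mom ρ n ≤ ENNReal.ofReal c) :
    Summable (fun i : ℕ => (i : ℝ) * ρ n i) ∧ (∑' i : ℕ, (i : ℝ) * ρ n i) ≤ c := by
  have hrw : ∀ i : ℕ, (i : ℝ≥0∞) * ENNReal.ofReal (ρ n i)
      = ENNReal.ofReal ((i : ℝ) * ρ n i) := by
    intro i
    rw [ENNReal.ofReal_mul (Nat.cast_nonneg i), ENNReal.ofReal_natCast]
  have hmom : mom ρ n = ∑' i : ℕ, ENNReal.ofReal ((i : ℝ) * ρ n i) := by
    simp only [mom, hrw]
  have hne : (∑' i : ℕ, ENNReal.ofReal ((i : ℝ) * ρ n i)) ≠ ∞ := by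
    rw [← hmom]
    exact ne_top_of_le_ne_top ENNReal.ofReal_ne_top h
  have hsum : Summable (fun i : ℕ => (i : ℝ) * ρ n i) := by
    have := ENNReal.summable_toReal hne
    refine this.congr (fun i => ?_)
    exact ENNReal.toReal_ofReal (mul_nonneg (Nat.cast_nonneg i) (hρ0 n i))
  refine ⟨hsum, ?_⟩
  have htr : (∑' i : ℕ, (i : ℝ) * ρ n i)
      = (∑' i : ℕ, ENNReal.ofReal ((i : ℝ) * ρ n i)).toReal := by
    rw [ENNReal.tsum_toReal_eq (fun i => ENNReal.ofReal_ne_top)]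
    exact tsum_congr (fun i =>
      (ENNReal.toReal_ofReal (mul_nonneg (Nat.cast_nonneg i) (hρ0 n i))).symm)
  rw [htr, ← hmom]
  calc (mom ρ n).toReal ≤ (ENNReal.ofReal c).toReal :=
        ENNReal.toReal_mono ENNReal.ofReal_ne_top h
    _ = c := ENNReal.toReal_ofReal hc

/-- Key contraction estimate: `1 - Φ_n(z) ≤ c (1 - z)` when `m_n ≤ c`. -/
lemma one_sub_phi_le (hρ0 : ∀ n i, 0 ≤ ρ n i) (hρ1 : ∀ n, HasSum (ρ n) 1)
    {n : ℕ} {c : ℝ} (hc : 0 ≤ c) (h : mom ρ n ≤ ENNReal.ofReal c)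
    {z : ℝ} (hz0 : 0 ≤ z) (hz1 : z ≤ 1) :
    1 - Phi ρ n z ≤ c * (1 - z) := by
  obtain ⟨hsum, hle⟩ := mom_summable hρ0 hc h
  have hps := phi_summable hρ0 hρ1 n hz0 hz1
  have h1 : 1 - Phi ρ n z = ∑' i : ℕ, (ρ n i - ρ n i * z ^ i) := by
    rw [Summable.tsum_sub (hρ1 n).summable hps, (hρ1 n).tsum_eq, Phi]
  have h2 : (∑' i : ℕ, (ρ n i - ρ n i * z ^ i))
      ≤ ∑' i : ℕ, ((i : ℝ) * ρ n i) * (1 - z) := by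
    refine Summable.tsum_le_tsum (fun i => ?_) ((hρ1 n).summable.sub hps) (hsum.mul_right _)
    have : ρ n i - ρ n i * z ^ i = ρ n i * (1 - z ^ i) := by ring
    rw [this]
    calc ρ n i * (1 - z ^ i) ≤ ρ n i * ((i : ℝ) * (1 - z)) :=
          mul_le_mul_of_nonneg_left (one_sub_pow_le hz0 hz1 i) (hρ0 n i)
      _ = ((i : ℝ) * ρ n i) * (1 - z) := by ring
  rw [h1]
  calc (∑' i : ℕ, (ρ n i - ρ n i * z ^ i)) ≤ ∑' i : ℕ, ((i : ℝ) * ρ n i) * (1 - z) := h2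
    _ = (∑' i : ℕ, (i : ℝ) * ρ n i) * (1 - z) := tsum_mul_right
    _ ≤ c * (1 - z) := mul_le_mul_of_nonneg_right hle (by linarith)

/-- `H` after shifting the environment. -/
lemma Hseq_shift (N : ℕ) : ∀ n z,
    Hseq ρ (N + n) z = Hseq ρ N (Hseq (fun k => ρ (N + k)) n z) := by
  intro n
  induction n with
  | zero => intro z; simp [Hseq]
  | succ n ih =>
    intro z
    show Hseq ρ (N + n) (Phi ρ (N + n) z) = _
    rw [ih (Phi ρ (N + n) z)]
    rfl

/-- Sequential continuity of `Φ_n` at `1` from within `[0,1]`. -/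
lemma phi_tendsto_one (hρ0 : ∀ n i, 0 ≤ ρ n i) (hρ1 : ∀ n, HasSum (ρ n) 1)
    (n : ℕ) {z : ℕ → ℝ} (hz0 : ∀ j, 0 ≤ z j) (hz1 : ∀ j, z j ≤ 1)
    (hz : Tendsto z atTop (nhds 1)) :
    Tendsto (fun j => Phi ρ n (z j)) atTop (nhds 1) := by
  have := tendsto_tsum_of_dominated_convergence (𝓕 := atTop)
    (f := fun j i => ρ n i * z j ^ i) (g := fun i => ρ n i) (bound := ρ n)
    (hρ1 n).summable
    (fun i => by
      have : Tendsto (fun j => z j ^ i) atTop (nhds (1 ^ i)) := hz.pow i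
      simpa using this.const_mul (ρ n i))
    (Eventually.of_forall (fun j i => by
      rw [Real.norm_eq_abs, abs_mul, abs_of_nonneg (hρ0 n i),
        abs_of_nonneg (pow_nonneg (hz0 j) i)]
      calc ρ n i * z j ^ i ≤ ρ n i * 1 :=
            mul_le_mul_of_nonneg_left (pow_le_one₀ (hz0 j) (hz1 j)) (hρ0 n i)
        _ = ρ n i := mul_one _))
  simpa [Phi, (hρ1 n).tsum_eq] using this

/-- Sequential continuity of `H_N` at `1` from within `[0,1]`, with `H_N(1) = 1`. -/
lemma Hseq_tendsto_one (hρ0 : ∀ n i, 0 ≤ ρ n i) (hρ1 : ∀ n, HasSum (ρ n) 1)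
    (N : ℕ) : ∀ {z : ℕ → ℝ}, (∀ j, 0 ≤ z j) → (∀ j, z j ≤ 1) →
    Tendsto z atTop (nhds 1) →
    Tendsto (fun j => Hseq ρ N (z j)) atTop (nhds 1) := by
  induction N with
  | zero => intro z _ _ hz; exact hz
  | succ N ih =>
    intro z hz0 hz1 hz
    show Tendsto (fun j => Hseq ρ N (Phi ρ N (z j))) atTop (nhds 1)
    exact ih (fun j => phi_nonneg hρ0 N (hz0 j))
      (fun j => phi_le_one hρ0 hρ1 N (hz0 j) (hz1 j))
      (phi_tendsto_one hρ0 hρ1 N hz0 hz1 hz)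

end Aux

/-- a BPVE with `limsup_n m_n < 1` dies out, i.e. `p_e = 1`. -/
theorem bpve_extinction_of_limsup_mean_lt_one (ρ : ℕ → ℕ → ℝ)
    (hρ0 : ∀ n i, 0 ≤ ρ n i) (hρ1 : ∀ n, HasSum (ρ n) 1)
    (hρlt : ∀ n, ρ n 0 < 1)
    (hlim : limsup (mom ρ) atTop < 1)
    (pe : ℝ) (hpe : Tendsto (fun n => Hseq ρ n 0) atTop (nhds pe)) :
    pe = 1 := by
  -- pick a bound c with limsup < c < 1
  obtain ⟨cE, hc1, hc2⟩ := exists_between hlim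
  obtain ⟨N, hN⟩ := (eventually_atTop.mp (eventually_lt_of_limsup_lt hc1))
  set c : ℝ := cE.toReal with hc
  have hcE_ne : cE ≠ ∞ := ne_top_of_lt hc2
  have hc0 : 0 ≤ c := ENNReal.toReal_nonneg
  have hclt : c < 1 := by
    rw [hc]
    have := ENNReal.toReal_strict_mono ENNReal.one_ne_top hc2
    simpa using this
  have hcofReal : ENNReal.ofReal c = cE := ENNReal.ofReal_toReal hcE_ne
  set ρ' : ℕ → ℕ → ℝ := fun k => ρ (N + k) with hρ'
  have hρ'0 : ∀ n i, 0 ≤ ρ' n i := fun n i => hρ0 _ i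
  have hρ'1 : ∀ n, HasSum (ρ' n) 1 := fun n => hρ1 _
  have hmom' : ∀ n, mom ρ' n ≤ ENNReal.ofReal c := by
    intro n
    rw [hcofReal]
    exact le_of_lt (hN (N + n) (Nat.le_add_right N n))
  -- main estimate by induction
  have key : ∀ n, ∀ w : ℝ, 0 ≤ w → w ≤ 1 →
      0 ≤ Hseq ρ' n w ∧ Hseq ρ' n w ≤ 1 ∧ 1 - Hseq ρ' n w ≤ c ^ n * (1 - w) := by
    intro n
    induction n with
    | zero => intro w hw0 hw1; exact ⟨hw0, hw1, by simp [Hseq]⟩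
    | succ n ih =>
      intro w hw0 hw1
      have hp0 := phi_nonneg (ρ := ρ') hρ'0 n hw0
      have hp1 := phi_le_one (ρ := ρ') hρ'0 hρ'1 n hw0 hw1
      obtain ⟨h1, h2, h3⟩ := ih (Phi ρ' n w) hp0 hp1
      refine ⟨h1, h2, ?_⟩
      have hphi : 1 - Phi ρ' n w ≤ c * (1 - w) :=
        one_sub_phi_le (ρ := ρ') hρ'0 hρ'1 hc0 (hmom' n) hw0 hw1
      show 1 - Hseq ρ' n (Phi ρ' n w) ≤ c ^ (n + 1) * (1 - w)
      calc 1 - Hseq ρ' n (Phi ρ' n w) ≤ c ^ n * (1 - Phi ρ' n w) := h3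
        _ ≤ c ^ n * (c * (1 - w)) :=
            mul_le_mul_of_nonneg_left hphi (pow_nonneg hc0 n)
        _ = c ^ (n + 1) * (1 - w) := by ring
  -- hence Hseq ρ' n 0 → 1
  set z : ℕ → ℝ := fun n => Hseq ρ' n 0 with hz
  have hz0 : ∀ n, 0 ≤ z n := fun n => (key n 0 le_rfl zero_le_one).1
  have hz1 : ∀ n, z n ≤ 1 := fun n => (key n 0 le_rfl zero_le_one).2.1
  have hzb : ∀ n, 1 - z n ≤ c ^ n := by
    intro n
    have := (key n 0 le_rfl zero_le_one).2.2
    simpa using this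
  have hztend : Tendsto z atTop (nhds 1) := by
    have hcpow : Tendsto (fun n => c ^ n) atTop (nhds 0) :=
      tendsto_pow_atTop_nhds_zero_of_lt_one hc0 hclt
    have hlow : Tendsto (fun n => 1 - c ^ n) atTop (nhds 1) := by
      simpa using (tendsto_const_nhds (x := (1:ℝ))).sub hcpow
    refine tendsto_of_tendsto_of_tendsto_of_le_of_le hlow tendsto_const_nhds
      (fun n => by have := hzb n; linarith) hz1
  -- compose with H_N
  have htend : Tendsto (fun n => Hseq ρ (N + n) 0) atTop (nhds 1) := by
    have : (fun n => Hseq ρ (N + n) 0) = fun n => Hseq ρ N (z n) := by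
      funext n
      exact Hseq_shift N n 0
    rw [this]
    exact Hseq_tendsto_one hρ0 hρ1 N hz0 hz1 hztend
  -- uniqueness of limits
  have hsub : Tendsto (fun n => Hseq ρ (N + n) 0) atTop (nhds pe) := by
    have := hpe.comp (tendsto_add_atTop_nat N)
    simpa [Function.comp_def, Nat.add_comm] using this
  exact tendsto_nhds_unique hsub htend
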